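/- Define polynomials f_{k,i}(x) by f_{0,0}(x) = 1, f_{k,i}(x) = 0 for k < i, and f_{k+1,i}(x) = (1+x)^{k+1-i} · Σ_{j=0}^{i} f_{k,j}(x) − f_{k,i}(x). Then for every k ≥ 0, Σ_{i=0}^{k} f_{k,i}(x) = (1+x)^{binomial(k+1,2)}. -/

import Mathlib

open Polynomial

noncomputable def uu : Polynomial ℤ := 1 + X

noncomputable def g (k i : ℕ) : Polynomial ℤ :=
  uu ^ ((i+1).choose 2) * ∏ j ∈ Finset.Ico (i+1) (k+1), (uu ^ j - 1)

lemma choose_succ2 (i : ℕ) : (i+2).choose 2 = (i+1).choose 2 + (i+1) := by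
  simp [Nat.choose_succ_succ, Nat.choose_one_right, Nat.add_comm]

lemma g_succ_zero (k : ℕ) : g (k+1) 0 = (uu ^ (k+1) - 1) * g k 0 := by
  unfold g
  rw [Finset.prod_Ico_succ_top (by omega : 1 ≤ k+1)]
  ring

lemma g_top (k : ℕ) : g (k+1) (k+1) = g (k+1) k + g k k := by
  unfold g
  rw [Finset.Ico_self, Finset.prod_empty,
    Finset.prod_Ico_succ_top (by omega : k+1 ≤ k+1), Finset.Ico_self, Finset.prod_empty,
    choose_succ2, pow_add]
  ring

lemma g_mid (k i : ℕ) (h : i + 1 ≤ k) :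
    g (k+1) (i+1) = g (k+1) i + (uu ^ (k-i) - 1) * g k (i+1) + g k i := by
  unfold g
  rw [Finset.prod_eq_prod_Ico_succ_bot (by omega : i+1 < k+1),
    Finset.prod_eq_prod_Ico_succ_bot (by omega : i+1 < k+2),
    Finset.prod_Ico_succ_top (by omega : i+2 ≤ k+1),
    choose_succ2, pow_add]
  have hk : k + 1 = (k - i) + (i + 1) := by omega
  rw [hk, pow_add]
  ring

lemma main_lemma (f : ℕ → ℕ → Polynomial ℤ) (h00 : f 0 0 = 1)
    (hz : ∀ k i, k < i → f k i = 0)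
    (hrec : ∀ k i, i ≤ k + 1 →
      f (k + 1) i = (1 + X) ^ (k + 1 - i) * (∑ j ∈ Finset.range (i + 1), f k j) - f k i) :
    ∀ k i, i ≤ k → ∑ j ∈ Finset.range (i+1), f k j = g k i := by
  intro k
  induction k with
  | zero =>
    intro i hi
    interval_cases i
    simp [h00, g, uu]
  | succ k ih =>
    intro i hi
    induction i with
    | zero =>
      have h0 : f k 0 = g k 0 := by
        have := ih 0 (Nat.zero_le k)
        simpa using this
      rw [Finset.sum_range_one, hrec k 0 (by omega), Finset.sum_range_one, h0, g_succ_zero]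
      show uu ^ (k + 1 - 0) * g k 0 - g k 0 = _
      simp only [Nat.sub_zero]
      ring
    | succ i ihi =>
      rw [Finset.sum_range_succ, ihi (by omega), hrec k (i+1) (by omega)]
      rcases Nat.lt_or_ge (i+1) (k+1) with hc | hc
      · have h1 : i + 1 ≤ k := by omega
        have hs1 : ∑ j ∈ Finset.range (i+2), f k j = g k (i+1) := ih (i+1) h1
        have hs0 : ∑ j ∈ Finset.range (i+1), f k j = g k i := ih i (by omega)
        have hf : f k (i+1) = g k (i+1) - g k i := by
          rw [← hs1, ← hs0, Finset.sum_range_succ]; ring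
        rw [hs1, hf, g_mid k i h1]
        have hk : k + 1 - (i+1) = k - i := by omega
        rw [hk]
        show _ + (uu ^ (k - i) * _ - _) = _
        ring
      · have hik : i = k := by omega
        subst hik
        have hs0 : ∑ j ∈ Finset.range (i+2), f i j = g i i + f i (i+1) := by
          rw [Finset.sum_range_succ, ih i le_rfl]
        rw [hs0, g_top, hz i (i+1) (by omega)]
        simp

theorem stmt6 (f : ℕ → ℕ → Polynomial ℤ) (h00 : f 0 0 = 1)
    (hz : ∀ k i, k < i → f k i = 0)
    (hrec : ∀ k i, i ≤ k + 1 →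
      f (k + 1) i = (1 + X) ^ (k + 1 - i) * (∑ j ∈ Finset.range (i + 1), f k j) - f k i)
    (k : ℕ) :
    ∑ i ∈ Finset.range (k + 1), f k i = (1 + X) ^ (Nat.choose (k + 1) 2) := by
  have := main_lemma f h00 hz hrec k k le_rfl
  rw [this]
  simp [g, uu]
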